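/- Let f : ℝⁿ → ℝ be C^{1,1} near x with ∇f(x) = 0. Then the following are equivalent: (i) for every h with ‖h‖ = 1 and every p ∈ D*(∂f)(x,0)(h), ⟨p, h⟩ > 0; (ii) there exists β > 0 such that ⟨Qh, h⟩ ≥ β for every Q ∈ D̄²f(x,0) and every h with ‖h‖ = 1. -/

import Mathlib

open Filter Topology Metric Set
open scoped RealInnerProductSpace

noncomputable section

namespace Paper

attribute [local instance] Classical.propDecidable

/-- Ambient Euclidean space `ℝⁿ`. -/
abbrev E (n : ℕ) := EuclideanSpace ℝ (Fin n)

variable {n : ℕ}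

/-- A proper extended-real-valued function: never `-∞` and finite somewhere. -/
def ProperFn (f : E n → EReal) : Prop :=
  (∀ x, f x ≠ ⊥) ∧ ∃ x, f x ≠ ⊤

/-- The proximal subdifferential `∂_p f(x)`. -/
def proxSubdiff (f : E n → EReal) (x : E n) : Set (E n) :=
  {z | ∃ r : ℝ, 0 ≤ r ∧ ∃ δ : ℝ, 0 < δ ∧ ∀ x' : E n, ‖x' - x‖ < δ →
      f x + ((⟪z, x' - x⟫ - r / 2 * ‖x' - x‖ ^ 2 : ℝ) : EReal) ≤ f x'}

/-- The limiting (Mordukhovich) subdifferential `∂ f(x)`. -/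
def limSubdiff (f : E n → EReal) (x : E n) : Set (E n) :=
  {z | ∃ xk zk : ℕ → E n,
      (∀ k, zk k ∈ proxSubdiff f (xk k)) ∧
      Tendsto xk atTop (𝓝 x) ∧
      Tendsto (fun k => f (xk k)) atTop (𝓝 (f x)) ∧
      Tendsto zk atTop (𝓝 z)}

/-- The singular limiting subdifferential `∂^∞ f(x)`. -/
def singSubdiff (f : E n → EReal) (x : E n) : Set (E n) :=
  {z | ∃ (xk zk : ℕ → E n) (lk : ℕ → ℝ),
      (∀ k, zk k ∈ proxSubdiff f (xk k)) ∧ (∀ k, 0 < lk k) ∧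
      Tendsto xk atTop (𝓝 x) ∧
      Tendsto (fun k => f (xk k)) atTop (𝓝 (f x)) ∧
      Tendsto lk atTop (𝓝 0) ∧
      Tendsto (fun k => lk k • zk k) atTop (𝓝 z)}

/-- `f` is quadratically minorised (prox-bounded). -/
def QuadMinorized (f : E n → EReal) (xb : E n) : Prop :=
  ∃ α R : ℝ, 0 < R ∧ ∀ x, ((α - R / 2 * ‖x - xb‖ ^ 2 : ℝ) : EReal) ≤ f x

/-- `f` is prox-regular at `xb` for `zb` with respect to `ε` and `r`. -/
def ProxRegularAt (f : E n → EReal) (xb zb : E n) (ε r : ℝ) : Prop :=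
  0 < ε ∧ 0 ≤ r ∧ zb ∈ limSubdiff f xb ∧
  ∀ x z : E n, z ∈ limSubdiff f x → ‖x - xb‖ ≤ ε → ‖z - zb‖ ≤ ε →
    f x ≤ f xb + (ε : EReal) → f xb ≤ f x + (ε : EReal) →
    ∀ x' : E n, ‖x' - xb‖ ≤ ε →
      f x + ((⟪z, x' - x⟫ - r / 2 * ‖x' - x‖ ^ 2 : ℝ) : EReal) ≤ f x'

/-- `f` is subdifferentially continuous at `xb` for `zb`. -/
def SubdiffContinuousAt (f : E n → EReal) (xb zb : E n) : Prop :=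
  ∀ δ : ℝ, 0 < δ → ∃ ε : ℝ, 0 < ε ∧ ∀ x z : E n, z ∈ limSubdiff f x →
    ‖x - xb‖ ≤ ε → ‖z - zb‖ ≤ ε →
    f x ≤ f xb + (δ : EReal) ∧ f xb ≤ f x + (δ : EReal)

/-- The subjet `∂^{2,-} f(x)`: pairs `(∇φ(x), ∇²φ(x))` for `C²` functions `φ`
with `f - φ` having a local minimum at `x`. -/
def subjet (f : E n → EReal) (x : E n) : Set (E n × (E n →L[ℝ] E n)) :=
  {p | ∃ φ : E n → ℝ, ContDiff ℝ 2 φ ∧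
      IsLocalMin (fun y => f y - ((φ y : ℝ) : EReal)) x ∧
      p.1 = gradient φ x ∧ p.2 = fderiv ℝ (gradient φ) x}

/-- Pointwise subhessians `∂^{2,-} f(x,z)`. -/
def subhessian (f : E n → EReal) (x z : E n) : Set (E n →L[ℝ] E n) :=
  {Q | (z, Q) ∈ subjet f x}

/-- The limiting subjet `∂̲² f(x)`. -/
def limSubjet (f : E n → EReal) (x : E n) : Set (E n × (E n →L[ℝ] E n)) :=
  {p | ∃ (xk : ℕ → E n) (pk : ℕ → E n × (E n →L[ℝ] E n)),
      (∀ k, pk k ∈ subjet f (xk k)) ∧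
      Tendsto xk atTop (𝓝 x) ∧
      Tendsto (fun k => f (xk k)) atTop (𝓝 (f x)) ∧
      Tendsto pk atTop (𝓝 p)}

/-- The limiting subhessians `∂̲² f(x,z)`. -/
def limSubhessian (f : E n → EReal) (x z : E n) : Set (E n →L[ℝ] E n) :=
  {Q | (z, Q) ∈ limSubjet f x}

/-- The rank-one support `q(𝒜)(h) = sup {⟨Q h, h⟩ : Q ∈ 𝒜}`. -/
def q1 (A : Set (E n →L[ℝ] E n)) (h : E n) : EReal :=
  ⨆ Q ∈ A, ((⟪Q h, h⟫ : ℝ) : EReal)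

/-- The rank-one barrier cone `b¹(𝒜) = dom q(𝒜)`. -/
def b1 (A : Set (E n →L[ℝ] E n)) : Set (E n) :=
  {h | q1 A h < ⊤}

/-- Support function `δ*_C`. -/
def suppFn (C : Set (E n)) (u : E n) : EReal :=
  ⨆ z ∈ C, ((⟪z, u⟫ : ℝ) : EReal)

/-- The set of minimisers of the tilted function `f - ⟨·, z⟩` over the closed
`ε`-ball around `xb`. -/
def tiltArgmin (f : E n → EReal) (xb : E n) (ε : ℝ) (z : E n) : Set (E n) :=
  {x | ‖x - xb‖ ≤ ε ∧ ∀ y : E n, ‖y - xb‖ ≤ ε →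
      f x - ((⟪x, z⟫ : ℝ) : EReal) ≤ f y - ((⟪y, z⟫ : ℝ) : EReal)}

/-- `xb` gives a tilt stable local minimum of `f` with radius `ε`. -/
def TiltStableWith (f : E n → EReal) (xb : E n) (ε : ℝ) : Prop :=
  0 < ε ∧ f xb ≠ ⊤ ∧ f xb ≠ ⊥ ∧
  ∃ (m : E n → E n) (δ : ℝ) (L : NNReal), 0 < δ ∧
    LipschitzOnWith L m (ball (0 : E n) δ) ∧ m 0 = xb ∧
    ∀ z ∈ ball (0 : E n) δ, tiltArgmin f xb ε z = {m z}

/-- `xb` gives a tilt stable local minimum of `f`. -/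
def TiltStable (f : E n → EReal) (xb : E n) : Prop :=
  ∃ ε : ℝ, TiltStableWith f xb ε

/-- Tilted argmin relative to a subspace `W`. -/
def tiltArgminOn (W : Submodule ℝ (E n)) (f : E n → EReal) (xb : E n) (ε : ℝ)
    (z : E n) : Set (E n) :=
  {x | x ∈ W ∧ ‖x - xb‖ ≤ ε ∧ ∀ y ∈ (W : Set (E n)), ‖y - xb‖ ≤ ε →
      f x - ((⟪x, z⟫ : ℝ) : EReal) ≤ f y - ((⟪y, z⟫ : ℝ) : EReal)}

/-- Tilt stable local minimum of a function considered on a subspace `W`. -/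
def TiltStableOnWith (W : Submodule ℝ (E n)) (f : E n → EReal) (xb : E n)
    (ε : ℝ) : Prop :=
  0 < ε ∧ f xb ≠ ⊤ ∧ f xb ≠ ⊥ ∧
  ∃ (m : E n → E n) (δ : ℝ) (L : NNReal), 0 < δ ∧
    LipschitzOnWith L m (ball (0 : E n) δ ∩ (W : Set (E n))) ∧ m 0 = xb ∧
    ∀ z ∈ ball (0 : E n) δ ∩ (W : Set (E n)), tiltArgminOn W f xb ε z = {m z}

def TiltStableOn (W : Submodule ℝ (E n)) (f : E n → EReal) (xb : E n) : Prop :=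
  ∃ ε : ℝ, TiltStableOnWith W f xb ε

/-- Epigraph with real heights. -/
def epiR (h : E n → EReal) : Set (E n × ℝ) :=
  {p | h p.1 ≤ (p.2 : EReal)}

/-- Lower semicontinuous convex hull `co h`: its epigraph is the closed convex
hull of the epigraph of `h`. -/
def coHull (h : E n → EReal) : E n → EReal :=
  fun w => sInf ((fun c : ℝ => (c : EReal)) ''
    {c : ℝ | (w, c) ∈ closure (convexHull ℝ (epiR h))})

/-- Convex (Fenchel) conjugate. -/
def conj (g : E n → EReal) (z : E n) : EReal :=
  ⨆ x : E n, ((⟪z, x⟫ : ℝ) : EReal) - g x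

/-- Convex conjugate with respect to a subspace `W`. -/
def conjOn (W : Submodule ℝ (E n)) (g : E n → EReal) (z : E n) : EReal :=
  ⨆ x : W, ((⟪z, (x : E n)⟫ : ℝ) : EReal) - g (x : E n)

/-- The subdifferential of convex analysis `∂_co g(u)`. -/
def convexSubdiff (g : E n → EReal) (u : E n) : Set (E n) :=
  {z | ∀ u' : E n, g u + ((⟪z, u' - u⟫ : ℝ) : EReal) ≤ g u'}

/-- The convex subdifferential relative to a subspace `W`. -/
def convexSubdiffOn (W : Submodule ℝ (E n)) (g : E n → EReal) (u : E n) :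
    Set (E n) :=
  {z | z ∈ W ∧ ∀ u' ∈ (W : Set (E n)), g u + ((⟪z, u' - u⟫ : ℝ) : EReal) ≤ g u'}

/-- Orthogonal projection onto `W` as a map `E n →L[ℝ] E n`. -/
def projE (W : Submodule ℝ (E n)) : E n →L[ℝ] E n :=
  W.subtypeL.comp (W.orthogonalProjection)

/-- Fréchet (regular) normals to a subset of a product. -/
def frechetNormal2 (S : Set (E n × E n)) (p : E n × E n) : Set (E n × E n) :=
  {v | ∀ ε : ℝ, 0 < ε → ∃ δ : ℝ, 0 < δ ∧ ∀ q ∈ S,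
      ‖q.1 - p.1‖ < δ → ‖q.2 - p.2‖ < δ →
      ⟪v.1, q.1 - p.1⟫ + ⟪v.2, q.2 - p.2⟫ ≤ ε * (‖q.1 - p.1‖ + ‖q.2 - p.2‖)}

/-- Limiting (Mordukhovich) normals to a subset of a product. -/
def limNormal2 (S : Set (E n × E n)) (p : E n × E n) : Set (E n × E n) :=
  {v | ∃ pk vk : ℕ → E n × E n,
      (∀ k, pk k ∈ S ∧ vk k ∈ frechetNormal2 S (pk k)) ∧
      Tendsto pk atTop (𝓝 p) ∧ Tendsto vk atTop (𝓝 v)}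

/-- The Mordukhovich coderivative `D* F(x,y)(w)` of a set-valued map. -/
def coderiv (F : E n → Set (E n)) (x y w : E n) : Set (E n) :=
  {p | (p, -w) ∈ limNormal2 {q : E n × E n | q.2 ∈ F q.1} (x, y)}

/-- Limiting Hessians `D̄² f(x,z)` of a real-valued function. -/
def limHessians (f : E n → ℝ) (x z : E n) : Set (E n →L[ℝ] E n) :=
  {Q | ∃ xk : ℕ → E n,
      (∀ k, DifferentiableAt ℝ (gradient f) (xk k)) ∧
      Tendsto xk atTop (𝓝 x) ∧
      Tendsto (fun k => f (xk k)) atTop (𝓝 (f x)) ∧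
      Tendsto (fun k => gradient f (xk k)) atTop (𝓝 z) ∧
      Tendsto (fun k => fderiv ℝ (gradient f) (xk k)) atTop (𝓝 Q)}

/-- `f` is `C^{1,1}` near `x`: differentiable with locally Lipschitz gradient. -/
def C11Near (f : E n → ℝ) (x : E n) : Prop :=
  ∃ δ : ℝ, 0 < δ ∧ (∀ y ∈ ball x δ, DifferentiableAt ℝ f y) ∧
    ∃ L : NNReal, LipschitzOnWith L (gradient f) (ball x δ)

/-- Second-order difference quotient `Δ₂`. -/
def delta2 (g : E n → EReal) (x : E n) (t : ℝ) (z u : E n) : EReal :=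
  ((2 / t ^ 2 : ℝ) : EReal) *
    (g (x + t • u) - g x - ((t * ⟪z, u⟫ : ℝ) : EReal))

/-- Lower second-order Dini directional derivative `g″₋(x, z, h)`. -/
def dini2 (g : E n → EReal) (x z h : E n) : EReal :=
  liminf (fun p : ℝ × E n => delta2 g x p.1 z p.2) ((𝓝[>] (0 : ℝ)) ×ˢ 𝓝 h)

/-- Convexity for extended-real-valued functions. -/
def ERealConvexFn (g : E n → EReal) : Prop :=
  ∀ x y : E n, ∀ a b : ℝ, 0 ≤ a → 0 ≤ b → a + b = 1 →
    g (a • x + b • y) ≤ (a : EReal) * g x + (b : EReal) * g y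

/-- Indicator of the box `B_ε^{U'}(0) ⊕ B_ε^{U'^⊥}(0)`. -/
def boxInd (U' : Submodule ℝ (E n)) (ε : ℝ) (w : E n) : EReal :=
  if ‖projE U' w‖ ≤ ε ∧ ‖projE U'ᗮ w‖ ≤ ε then 0 else ⊤

/-- The localised auxiliary function `h(w) := f(xb+w) + δ_{B_ε^{U'}(0) ⊕ B_ε^{V'}(0)}(w)`. -/
def hFn (f : E n → EReal) (xb : E n) (U' : Submodule ℝ (E n)) (ε : ℝ)
    (w : E n) : EReal :=
  f (xb + w) + boxInd U' ε w

/-- The localised `U'`-Lagrangian `L^ε_{U'}`. -/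
def Lloc (f : E n → EReal) (xb : E n) (U' : Submodule ℝ (E n)) (ε : ℝ)
    (zbV : E n) : E n → EReal := fun u =>
  if u ∈ U' ∧ ‖u‖ ≤ ε then
    sInf ((fun v' : E n => f (xb + u + v') - ((⟪zbV, v'⟫ : ℝ) : EReal)) ''
      {v' : E n | v' ∈ U'ᗮ ∧ ‖v'‖ ≤ ε})
  else ⊤

/-- The auxiliary function `k_v(u) := h(u+v(u)) - ⟨zb_{V'}, u+v(u)⟩`. -/
def kFn (f : E n → EReal) (xb : E n) (U' : Submodule ℝ (E n)) (ε : ℝ)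
    (zbV : E n) (v : E n → E n) : E n → EReal := fun u =>
  hFn f xb U' ε (u + v u) - ((⟪zbV, u + v u⟫ : ℝ) : EReal)

/-- `w` is a minimiser of `v' ↦ f(xb+u+v') - ⟨zbV, v'⟩` over `V' ∩ B_ε(0)`. -/
def IsVSel (f : E n → EReal) (xb : E n) (V' : Submodule ℝ (E n)) (ε : ℝ)
    (zbV : E n) (u w : E n) : Prop :=
  w ∈ V' ∧ ‖w‖ ≤ ε ∧ ∀ w' ∈ (V' : Set (E n)), ‖w'‖ ≤ ε →
    f (xb + u + w) - ((⟪zbV, w⟫ : ℝ) : EReal) ≤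
      f (xb + u + w') - ((⟪zbV, w'⟫ : ℝ) : EReal)

/-- Global argmin set of the tilted function `g - ⟨·, z⟩` (the map `m_h`). -/
def msetArg (g : E n → EReal) (z : E n) : Set (E n) :=
  {w | ∀ w' : E n, g w - ((⟪w, z⟫ : ℝ) : EReal) ≤ g w' - ((⟪w', z⟫ : ℝ) : EReal)}



section Aux

variable {f : E n → ℝ} {x : E n} {δ : ℝ} {L : NNReal}

/-- Abbreviation for the `EReal`-valued version of `f`. -/
private def fE (f : E n → ℝ) : E n → EReal := fun w => ((f w : ℝ) : EReal)

lemma fderiv_eq_toDual_gradient (f : E n → ℝ) (z : E n) :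
    fderiv ℝ f z = InnerProductSpace.toDual ℝ (E n) (gradient f z) := by
  simp [gradient]

lemma norm_fderiv_sub (f : E n → ℝ) (z y : E n) :
    ‖fderiv ℝ f z - fderiv ℝ f y‖ = ‖gradient f z - gradient f y‖ := by
  rw [fderiv_eq_toDual_gradient, fderiv_eq_toDual_gradient, ← map_sub]
  exact (InnerProductSpace.toDual ℝ (E n)).norm_map _

lemma hasFDerivAt_of_mem (hdiff : ∀ y ∈ ball x δ, DifferentiableAt ℝ f y)
    {y : E n} (hy : y ∈ ball x δ) :
    HasFDerivAt f (InnerProductSpace.toDual ℝ (E n) (gradient f y)) y := by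
  rw [← fderiv_eq_toDual_gradient]
  exact (hdiff y hy).hasFDerivAt

/-- Quadratic Taylor bound from a Lipschitz gradient. -/
lemma taylor_bound (hdiff : ∀ y ∈ ball x δ, DifferentiableAt ℝ f y)
    (hlip : LipschitzOnWith L (gradient f) (ball x δ))
    {y x' : E n} (hy : y ∈ ball x δ) (hx' : 2 * ‖x' - y‖ < δ - ‖y - x‖) :
    |f x' - f y - ⟪gradient f y, x' - y⟫| ≤ 2 * L * ‖x' - y‖ ^ 2 := by
  rcases eq_or_ne x' y with rfl | hne
  · simp
  have hd0 : 0 < ‖x' - y‖ := by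
    rw [norm_pos_iff, sub_ne_zero]; exact hne
  set s : Set (E n) := ball y (2 * ‖x' - y‖) with hs
  have hsub : s ⊆ ball x δ := by
    intro z hz
    rw [mem_ball_iff_norm] at hz ⊢
    calc ‖z - x‖ ≤ ‖z - y‖ + ‖y - x‖ := norm_sub_le_norm_sub_add_norm_sub _ _ _
    _ < (δ - ‖y - x‖) + ‖y - x‖ := by
        have := hz.trans hx'
        linarith
    _ = δ := by ring
  have hdiff' : ∀ z ∈ s, DifferentiableAt ℝ f z := fun z hz => hdiff z (hsub hz)
  have hbound : ∀ z ∈ s, ‖fderiv ℝ f z - fderiv ℝ f y‖ ≤ (L : ℝ) * (2 * ‖x' - y‖) := by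
    intro z hz
    rw [norm_fderiv_sub]
    have := hlip.dist_le_mul z (hsub hz) y (hsub (mem_ball_self (by positivity)))
    rw [dist_eq_norm, dist_eq_norm] at this
    refine this.trans ?_
    have hzly : ‖z - y‖ ≤ 2 * ‖x' - y‖ := le_of_lt (by rwa [mem_ball_iff_norm] at hz)
    nlinarith [L.coe_nonneg]
  have hys : y ∈ s := mem_ball_self (by positivity)
  have hx's : x' ∈ s := by
    rw [mem_ball_iff_norm]; linarith
  have := (convex_ball y (2 * ‖x' - y‖)).norm_image_sub_le_of_norm_fderiv_le'
    hdiff' hbound hys hx's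
  rw [fderiv_eq_toDual_gradient, InnerProductSpace.toDual_apply_apply] at this
  rw [Real.norm_eq_abs] at this
  calc |f x' - f y - ⟪gradient f y, x' - y⟫| ≤ (L : ℝ) * (2 * ‖x' - y‖) * ‖x' - y‖ := this
  _ = 2 * L * ‖x' - y‖ ^ 2 := by ring

/-- The gradient is a proximal subgradient near `x`. -/
lemma grad_mem_prox (hdiff : ∀ y ∈ ball x δ, DifferentiableAt ℝ f y)
    (hlip : LipschitzOnWith L (gradient f) (ball x δ))
    {y : E n} (hy : y ∈ ball x δ) :
    gradient f y ∈ proxSubdiff (fE f) y := by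
  refine ⟨4 * L, by positivity, (δ - ‖y - x‖) / 3, ?_, ?_⟩
  · rw [mem_ball_iff_norm] at hy; linarith
  · intro x' hx'
    have hyx : ‖y - x‖ < δ := by rwa [mem_ball_iff_norm] at hy
    have htay := taylor_bound hdiff hlip hy (by linarith : 2 * ‖x' - y‖ < δ - ‖y - x‖)
    have h1 : f y + (⟪gradient f y, x' - y⟫ - 4 * L / 2 * ‖x' - y‖ ^ 2) ≤ f x' := by
      rw [abs_le] at htay
      nlinarith [htay.1]
    show ((f y : ℝ) : EReal) + _ ≤ ((f x' : ℝ) : EReal)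
    rw [← EReal.coe_add]
    exact_mod_cast h1

/-- Conversely, proximal subgradients at differentiability points are gradients. -/
lemma prox_subset_grad (hdiff : ∀ y ∈ ball x δ, DifferentiableAt ℝ f y)
    {y z : E n} (hy : y ∈ ball x δ) (hz : z ∈ proxSubdiff (fE f) y) :
    z = gradient f y := by
  obtain ⟨r, hr, δ', hδ', hineq⟩ := hz
  set u : E n := z - gradient f y with hu
  have key : ∀ c : ℝ, 0 < c → ‖u‖ ^ 2 ≤ c * ‖u‖ + c := by
    intro c hc
    rcases eq_or_ne u 0 with h0 | hne
    · simp [h0]; positivity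
    have hu0 : 0 < ‖u‖ := norm_pos_iff.2 hne
    have hder := hasFDerivAt_of_mem hdiff hy
    rw [hasFDerivAt_iff_isLittleO_nhds_zero] at hder
    have hev := hder.def hc
    rw [Metric.eventually_nhds_iff] at hev
    obtain ⟨δc, hδc, hball⟩ := hev
    set t : ℝ := min (min (δc / (2 * ‖u‖)) (δ' / (2 * ‖u‖))) (2 * c / (r * ‖u‖ ^ 2 + 1)) with ht
    have ht0 : 0 < t := by
      apply lt_min (lt_min (by positivity) (by positivity)) (by positivity)
    have htu : ‖t • u‖ = t * ‖u‖ := by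
      rw [norm_smul, Real.norm_eq_abs, abs_of_pos ht0]
    -- derivative estimate
    have h1 : |f (y + t • u) - f y - ⟪gradient f y, t • u⟫| ≤ c * (t * ‖u‖) := by
      have hlt : dist (t • u) (0 : E n) < δc := by
        rw [dist_zero_right, htu]
        calc t * ‖u‖ ≤ (δc / (2 * ‖u‖)) * ‖u‖ := by
              apply mul_le_mul_of_nonneg_right _ hu0.le
              exact (min_le_left _ _).trans (min_le_left _ _)
        _ = δc / 2 := by field_simp
        _ < δc := by linarith
      have h1' := hball hlt
      rw [InnerProductSpace.toDual_apply_apply, Real.norm_eq_abs, htu] at h1'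
      exact h1'
    -- proximal estimate
    have h2 : f y + (⟪z, t • u⟫ - r / 2 * ‖t • u‖ ^ 2) ≤ f (y + t • u) := by
      have hlt : ‖(y + t • u) - y‖ < δ' := by
        rw [add_sub_cancel_left, htu]
        calc t * ‖u‖ ≤ (δ' / (2 * ‖u‖)) * ‖u‖ := by
              apply mul_le_mul_of_nonneg_right _ hu0.le
              exact (min_le_left _ _).trans (min_le_right _ _)
        _ = δ' / 2 := by field_simp
        _ < δ' := by linarith
      have h2' := hineq (y + t • u) hlt
      rw [add_sub_cancel_left] at h2'
      simp only [fE] at h2'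
      rw [← EReal.coe_add] at h2'
      exact_mod_cast h2'
    -- combine
    have hinnz : ⟪z, t • u⟫ = t * ⟪z, u⟫ := real_inner_smul_right z u t
    have hinng : ⟪gradient f y, t • u⟫ = t * ⟪gradient f y, u⟫ :=
      real_inner_smul_right _ u t
    have hsq : ‖t • u‖ ^ 2 = t ^ 2 * ‖u‖ ^ 2 := by rw [htu]; ring
    have habs := abs_le.1 h1
    have hcomb : t * ⟪z - gradient f y, u⟫ ≤ c * (t * ‖u‖) + r / 2 * (t ^ 2 * ‖u‖ ^ 2) := by
      rw [inner_sub_left, mul_sub]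
      have := h2
      rw [hinnz, hsq] at this
      rw [hinng] at habs
      linarith [habs.2]
    have hzu : ⟪z - gradient f y, u⟫ = ‖u‖ ^ 2 := by
      rw [← hu, real_inner_self_eq_norm_sq]
    rw [hzu] at hcomb
    have htb : r / 2 * (t * ‖u‖ ^ 2) ≤ c := by
      have h4 : (0:ℝ) < r * ‖u‖ ^ 2 + 1 := by positivity
      have h3 : t * (r * ‖u‖ ^ 2 + 1) ≤ 2 * c := by
        rw [← le_div_iff₀ h4]; exact min_le_right _ _
      nlinarith [ht0.le, hr]
    have hq : t * (‖u‖ ^ 2) ≤ t * (c * ‖u‖ + r / 2 * (t * ‖u‖ ^ 2)) := by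
      nlinarith [hcomb]
    have := le_of_mul_le_mul_left hq ht0
    linarith [htb]
  -- conclude u = 0
  have hfinal : ‖u‖ ^ 2 ≤ 0 := by
    by_contra hpos
    push_neg at hpos
    set c := ‖u‖ ^ 2 / (2 * (‖u‖ + 1)) with hcdef
    have hcpos : 0 < c := div_pos hpos (by positivity)
    have hc := key c hcpos
    have hkey : c * (‖u‖ + 1) = ‖u‖ ^ 2 / 2 := by
      rw [hcdef]; field_simp
    nlinarith [hc, hkey, hpos]
  have : u = 0 := by
    have := pow_eq_zero_iff (n := 2) (by norm_num) |>.1 (le_antisymm hfinal (by positivity))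
    exact norm_eq_zero.1 this
  rw [← sub_eq_zero]; exact this


/-- The graph set of the limiting subdifferential map. -/
private def Sgr (f : E n → ℝ) : Set (E n × E n) := {q | q.2 ∈ limSubdiff (fE f) q.1}

lemma gradient_continuousAt (hlip : LipschitzOnWith L (gradient f) (ball x δ))
    {y : E n} (hy : y ∈ ball x δ) : ContinuousAt (gradient f) y :=
  hlip.continuousOn.continuousAt (isOpen_ball.mem_nhds hy)

lemma limSubdiff_eq (hdiff : ∀ y ∈ ball x δ, DifferentiableAt ℝ f y)
    (hlip : LipschitzOnWith L (gradient f) (ball x δ))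
    {y : E n} (hy : y ∈ ball x δ) :
    limSubdiff (fE f) y = {gradient f y} := by
  apply Set.eq_singleton_iff_unique_mem.2
  constructor
  · exact ⟨fun _ => y, fun _ => gradient f y,
      fun _ => grad_mem_prox hdiff hlip hy, tendsto_const_nhds,
      tendsto_const_nhds, tendsto_const_nhds⟩
  · rintro z ⟨xk, zk, hprox, hxk, -, hzk⟩
    have hev : ∀ᶠ k in atTop, xk k ∈ ball x δ :=
      hxk.eventually_mem (isOpen_ball.mem_nhds hy)
    have hcg : ContinuousAt (gradient f) y := gradient_continuousAt hlip hy
    have h1 : Tendsto (fun k => gradient f (xk k)) atTop (𝓝 (gradient f y)) :=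
      hcg.tendsto.comp hxk
    have h2 : Tendsto zk atTop (𝓝 (gradient f y)) := by
      refine h1.congr' ?_
      filter_upwards [hev] with k hk
      exact (prox_subset_grad hdiff hk (hprox k)).symm
    exact tendsto_nhds_unique hzk h2

lemma mem_Sgr (hdiff : ∀ y ∈ ball x δ, DifferentiableAt ℝ f y)
    (hlip : LipschitzOnWith L (gradient f) (ball x δ))
    {y : E n} (hy : y ∈ ball x δ) : (y, gradient f y) ∈ Sgr f := by
  show gradient f y ∈ limSubdiff (fE f) y
  rw [limSubdiff_eq hdiff hlip hy]; rfl

lemma Sgr_eq_grad (hdiff : ∀ y ∈ ball x δ, DifferentiableAt ℝ f y)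
    (hlip : LipschitzOnWith L (gradient f) (ball x δ))
    {q : E n × E n} (hq : q ∈ Sgr f) (hq1 : q.1 ∈ ball x δ) :
    q.2 = gradient f q.1 := by
  have := hq
  rw [Sgr, Set.mem_setOf_eq, limSubdiff_eq hdiff hlip hq1] at this
  exact this

lemma tendsto_apply_op {Ak : ℕ → E n →L[ℝ] E n} {A : E n →L[ℝ] E n}
    (hA : Tendsto Ak atTop (𝓝 A)) (v : E n) :
    Tendsto (fun k => Ak k v) atTop (𝓝 (A v)) :=
  ((ContinuousLinearMap.apply ℝ (E n) v).continuous.tendsto A).comp hA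

/-- At a point of differentiability of the gradient, `(Dg(y)ᵀ h, -h)` is a Fréchet
normal to the graph of the limiting subdifferential. -/
lemma frechet_normal_at_diff (hdiff : ∀ y ∈ ball x δ, DifferentiableAt ℝ f y)
    (hlip : LipschitzOnWith L (gradient f) (ball x δ))
    {y : E n} (hy : y ∈ ball x δ) (hdy : DifferentiableAt ℝ (gradient f) y)
    {h : E n} (hh : ‖h‖ ≤ 1) :
    ((ContinuousLinearMap.adjoint (fderiv ℝ (gradient f) y)) h, -h) ∈
      frechetNormal2 (Sgr f) (y, gradient f y) := by
  intro ε hε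
  have hlo := hdy.hasFDerivAt.isLittleO
  have hev := hlo.def hε
  rw [Metric.eventually_nhds_iff] at hev
  obtain ⟨δ₁, hδ₁, hb⟩ := hev
  have hyx : ‖y - x‖ < δ := by rwa [mem_ball_iff_norm] at hy
  refine ⟨min δ₁ (δ - ‖y - x‖), lt_min hδ₁ (by linarith), ?_⟩
  intro q hq hq1 hq2
  have hq1' : ‖q.1 - y‖ < δ₁ := lt_of_lt_of_le hq1 (min_le_left _ _)
  have hq1b : q.1 ∈ ball x δ := by
    rw [mem_ball_iff_norm]
    have h2 : ‖q.1 - y‖ < δ - ‖y - x‖ := lt_of_lt_of_le hq1 (min_le_right _ _)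
    calc ‖q.1 - x‖ ≤ ‖q.1 - y‖ + ‖y - x‖ := norm_sub_le_norm_sub_add_norm_sub _ _ _
    _ < δ := by linarith
  have hq2g : q.2 = gradient f q.1 := Sgr_eq_grad hdiff hlip hq hq1b
  have hlittle : ‖gradient f q.1 - gradient f y -
      (fderiv ℝ (gradient f) y) (q.1 - y)‖ ≤ ε * ‖q.1 - y‖ := by
    have := hb (show dist q.1 y < δ₁ by rwa [dist_eq_norm])
    exact this
  have hinner : ⟪(ContinuousLinearMap.adjoint (fderiv ℝ (gradient f) y)) h, q.1 - y⟫
      + ⟪-h, q.2 - gradient f y⟫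
      = -⟪h, gradient f q.1 - gradient f y - (fderiv ℝ (gradient f) y) (q.1 - y)⟫ := by
    rw [hq2g, ContinuousLinearMap.adjoint_inner_left, inner_neg_left,
      inner_sub_right, inner_sub_right, inner_sub_right]
    ring
  rw [hinner]
  calc -⟪h, gradient f q.1 - gradient f y - (fderiv ℝ (gradient f) y) (q.1 - y)⟫
      ≤ ‖h‖ * ‖gradient f q.1 - gradient f y - (fderiv ℝ (gradient f) y) (q.1 - y)‖ := by
        rw [← inner_neg_right]
        calc ⟪h, -(gradient f q.1 - gradient f y - (fderiv ℝ (gradient f) y) (q.1 - y))⟫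
            ≤ ‖h‖ * ‖-(gradient f q.1 - gradient f y - (fderiv ℝ (gradient f) y) (q.1 - y))‖ :=
              real_inner_le_norm _ _
        _ = ‖h‖ * ‖gradient f q.1 - gradient f y - (fderiv ℝ (gradient f) y) (q.1 - y)‖ := by
              rw [norm_neg]
  _ ≤ 1 * (ε * ‖q.1 - y‖) := by
        apply mul_le_mul hh hlittle (norm_nonneg _) zero_le_one
  _ ≤ ε * (‖q.1 - y‖ + ‖q.2 - gradient f y‖) := by
        have := norm_nonneg (q.2 - gradient f y)
        nlinarith


lemma hessian_mem_limNormal2 (hδ : 0 < δ)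
    (hdiff : ∀ y ∈ ball x δ, DifferentiableAt ℝ f y)
    (hlip : LipschitzOnWith L (gradient f) (ball x δ))
    (h0 : gradient f x = 0)
    {Q : E n →L[ℝ] E n} (hQ : Q ∈ limHessians f x 0) {h : E n} (hh : ‖h‖ ≤ 1) :
    ((ContinuousLinearMap.adjoint Q) h, -h) ∈ limNormal2 (Sgr f) (x, 0) := by
  obtain ⟨xk, hdk, hxk, hfk, hgk, hQk⟩ := hQ
  have hx0 : x ∈ ball x δ := mem_ball_self hδ
  set pk : ℕ → E n × E n :=
    fun k => if xk k ∈ ball x δ then (xk k, gradient f (xk k)) else (x, (0 : E n)) with hpk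
  set vk : ℕ → E n × E n :=
    fun k => if xk k ∈ ball x δ then
      ((ContinuousLinearMap.adjoint (fderiv ℝ (gradient f) (xk k))) h, -h)
    else ((0 : E n), (0 : E n)) with hvk
  have hev : ∀ᶠ k in atTop, xk k ∈ ball x δ :=
    hxk.eventually_mem (isOpen_ball.mem_nhds hx0)
  refine ⟨pk, vk, fun k => ?_, ?_, ?_⟩
  · by_cases hk : xk k ∈ ball x δ
    · simp only [hpk, hvk, if_pos hk]
      exact ⟨mem_Sgr hdiff hlip hk, frechet_normal_at_diff hdiff hlip hk (hdk k) hh⟩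
    · simp only [hpk, hvk, if_neg hk]
      constructor
      · have := mem_Sgr hdiff hlip hx0
        rwa [h0] at this
      · intro ε hε
        refine ⟨1, one_pos, fun q hq h1 h2 => ?_⟩
        simp only [inner_zero_left, add_zero]
        positivity
  · refine (hxk.prodMk_nhds hgk).congr' ?_
    filter_upwards [hev] with k hk
    simp only [hpk, if_pos hk]
  · have hadj : Tendsto (fun k => ContinuousLinearMap.adjoint (fderiv ℝ (gradient f) (xk k)))
        atTop (𝓝 (ContinuousLinearMap.adjoint Q)) :=
      ((ContinuousLinearMap.adjoint (𝕜 := ℝ) (E := E n) (F := E n)).continuous.tendsto Q).comp hQk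
    refine (((tendsto_apply_op hadj h).prodMk_nhds tendsto_const_nhds)).congr' ?_
    filter_upwards [hev] with k hk
    simp only [hvk, if_pos hk]

lemma hessian_posdef_of_coderiv_pos (hδ : 0 < δ)
    (hdiff : ∀ y ∈ ball x δ, DifferentiableAt ℝ f y)
    (hlip : LipschitzOnWith L (gradient f) (ball x δ))
    (h0 : gradient f x = 0)
    (hi : ∀ h : E n, ‖h‖ = 1 →
      ∀ p ∈ coderiv (fun y => limSubdiff (fE f) y) x 0 h, 0 < (⟪p, h⟫ : ℝ)) :
    ∀ Q ∈ limHessians f x 0, ∀ h : E n, ‖h‖ = 1 → 0 < (⟪Q h, h⟫ : ℝ) := by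
  intro Q hQ h hh
  have hmem : (ContinuousLinearMap.adjoint Q) h ∈
      coderiv (fun y => limSubdiff (fE f) y) x 0 h :=
    hessian_mem_limNormal2 hδ hdiff hlip h0 hQ hh.le
  have := hi h hh _ hmem
  rwa [ContinuousLinearMap.adjoint_inner_left, real_inner_comm] at this


lemma limHessians_approx {Q : E n →L[ℝ] E n} (hQ : Q ∈ limHessians f x 0)
    {η : ℝ} (hη : 0 < η) :
    ∃ y : E n, DifferentiableAt ℝ (gradient f) y ∧ dist y x < η ∧
      dist (f y) (f x) < η ∧ dist (gradient f y) 0 < η ∧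
      dist (fderiv ℝ (gradient f) y) Q < η := by
  obtain ⟨xk, hdk, hxk, hfk, hgk, hQk⟩ := hQ
  have e1 := hxk.eventually (Metric.ball_mem_nhds x hη)
  have e2 := hfk.eventually (Metric.ball_mem_nhds (f x) hη)
  have e3 := hgk.eventually (Metric.ball_mem_nhds (0 : E n) hη)
  have e4 := hQk.eventually (Metric.ball_mem_nhds Q hη)
  obtain ⟨k, h1, h2, h3, h4⟩ := (e1.and (e2.and (e3.and e4))).exists
  exact ⟨xk k, hdk k, h1, h2, h3, h4⟩

lemma one_div_succ_tendsto : Tendsto (fun j : ℕ => 1 / ((j : ℝ) + 1)) atTop (𝓝 0) :=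
  tendsto_one_div_add_atTop_nhds_zero_nat

set_option maxHeartbeats 1000000 in
/-- Core compactness extraction. -/
lemma core_extract (hδ : 0 < δ)
    (hdiff : ∀ y ∈ ball x δ, DifferentiableAt ℝ f y)
    (hlip : LipschitzOnWith L (gradient f) (ball x δ))
    (h0 : gradient f x = 0)
    (y : ℕ → E n) (hyb : ∀ j, y j ∈ ball x δ)
    (hdy : ∀ j, DifferentiableAt ℝ (gradient f) (y j))
    (hyx : Tendsto y atTop (𝓝 x))
    (u : ℕ → E n) (hu : ∀ j, ‖u j‖ = 1) :
    ∃ (Q : E n →L[ℝ] E n) (h : E n) (φ : ℕ → ℕ), StrictMono φ ∧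
      Q ∈ limHessians f x 0 ∧ ‖h‖ = 1 ∧
      Tendsto (fun j => (⟪fderiv ℝ (gradient f) (y (φ j)) (u (φ j)), u (φ j)⟫ : ℝ))
        atTop (𝓝 (⟪Q h, h⟫ : ℝ)) := by
  have hKc : IsCompact ((closedBall (0 : E n →L[ℝ] E n) (L : ℝ)) ×ˢ (sphere (0 : E n) 1)) :=
    (isCompact_closedBall (0 : E n →L[ℝ] E n) (L : ℝ)).prod (isCompact_sphere (0 : E n) 1)
  have hWm : ∀ j, (fderiv ℝ (gradient f) (y j), u j)
      ∈ (closedBall (0 : E n →L[ℝ] E n) (L : ℝ)) ×ˢ (sphere (0 : E n) 1) := by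
    intro j
    constructor
    · rw [mem_closedBall_zero_iff]
      exact norm_fderiv_le_of_lipschitzOn (𝕜 := ℝ) (isOpen_ball.mem_nhds (hyb j)) hlip
    · rw [mem_sphere_zero_iff_norm]; exact hu j
  obtain ⟨⟨Q, h⟩, hQh, φ, hφ, hWφ⟩ := hKc.tendsto_subseq hWm
  have hWφ' : Tendsto (fun j => (fderiv ℝ (gradient f) (y (φ j)), u (φ j)))
      atTop (𝓝 (Q, h)) := hWφ.congr fun j => rfl
  have hQt : Tendsto (fun j => fderiv ℝ (gradient f) (y (φ j))) atTop (𝓝 Q) :=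
    ((continuous_fst.tendsto (Q, h)).comp hWφ').congr fun j => rfl
  have hut : Tendsto (fun j => u (φ j)) atTop (𝓝 h) :=
    ((continuous_snd.tendsto (Q, h)).comp hWφ').congr fun j => rfl
  have hcf : ContinuousAt f x := (hdiff x (mem_ball_self hδ)).continuousAt
  have hcg : ContinuousAt (gradient f) x := gradient_continuousAt hlip (mem_ball_self hδ)
  have hyφ : Tendsto (fun j => y (φ j)) atTop (𝓝 x) := hyx.comp hφ.tendsto_atTop
  refine ⟨Q, h, φ, hφ, ?_, ?_, ?_⟩
  · refine ⟨fun j => y (φ j), fun j => hdy (φ j), hyφ, hcf.tendsto.comp hyφ, ?_, hQt⟩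
    have := hcg.tendsto.comp hyφ
    rwa [h0] at this
  · exact mem_sphere_zero_iff_norm.1 hQh.2
  · have hc1 : Continuous fun p : (E n →L[ℝ] E n) × E n => p.1 p.2 :=
      isBoundedBilinearMap_apply.continuous
    have hQu : Tendsto (fun j => fderiv ℝ (gradient f) (y (φ j)) (u (φ j)))
        atTop (𝓝 (Q h)) :=
      ((hc1.tendsto (Q, h)).comp hWφ').congr fun j => rfl
    exact hQu.inner hut

/-- Uniform positivity of limiting Hessians from pointwise positivity. -/
lemma exists_beta (hδ : 0 < δ)
    (hdiff : ∀ y ∈ ball x δ, DifferentiableAt ℝ f y)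
    (hlip : LipschitzOnWith L (gradient f) (ball x δ))
    (h0 : gradient f x = 0)
    (hpos : ∀ Q ∈ limHessians f x 0, ∀ h : E n, ‖h‖ = 1 → 0 < (⟪Q h, h⟫ : ℝ)) :
    ∃ β : ℝ, 0 < β ∧ ∀ Q ∈ limHessians f x 0, ∀ h : E n, ‖h‖ = 1 →
      β ≤ (⟪Q h, h⟫ : ℝ) := by
  by_contra hcon
  push_neg at hcon
  have hsel : ∀ j : ℕ, ∃ (Q : E n →L[ℝ] E n) (h : E n),
      Q ∈ limHessians f x 0 ∧ ‖h‖ = 1 ∧ (⟪Q h, h⟫ : ℝ) < 1 / ((j : ℝ) + 1) := by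
    intro j
    obtain ⟨Q, hQ, h, hh, hlt⟩ := hcon (1 / ((j : ℝ) + 1)) (by positivity)
    exact ⟨Q, h, hQ, hh, hlt⟩
  choose Qs hs hQs hhs hlt using hsel
  have hηj : ∀ j : ℕ, (0:ℝ) < min δ (1 / ((j : ℝ) + 1)) := by
    intro j; exact lt_min hδ (by positivity)
  have hsel2 : ∀ j : ℕ, ∃ y : E n, DifferentiableAt ℝ (gradient f) y ∧
      dist y x < min δ (1 / ((j : ℝ) + 1)) ∧
      dist (fderiv ℝ (gradient f) y) (Qs j) < 1 / ((j : ℝ) + 1) := by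
    intro j
    obtain ⟨y, hd, h1, -, -, h4⟩ := limHessians_approx (hQs j) (hηj j)
    exact ⟨y, hd, h1, h4.trans_le (min_le_right _ _)⟩
  choose ys hdy hy1 hy2 using hsel2
  have hyb : ∀ j, ys j ∈ ball x δ := fun j =>
    mem_ball.2 ((hy1 j).trans_le (min_le_left _ _))
  have hyx : Tendsto ys atTop (𝓝 x) := by
    rw [tendsto_iff_dist_tendsto_zero]
    exact squeeze_zero (fun j => dist_nonneg)
      (fun j => ((hy1 j).trans_le (min_le_right _ _)).le) one_div_succ_tendsto
  obtain ⟨Q, h, φ, hφ, hQmem, hhn, htend⟩ :=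
    core_extract hδ hdiff hlip h0 ys hyb hdy hyx hs hhs
  have hub : ∀ j : ℕ, (⟪fderiv ℝ (gradient f) (ys (φ j)) (hs (φ j)), hs (φ j)⟫ : ℝ)
      ≤ 2 / ((j : ℝ) + 1) := by
    intro j
    have h2 := hy2 (φ j)
    rw [dist_eq_norm] at h2
    have hdiffb : (⟪(fderiv ℝ (gradient f) (ys (φ j)) - Qs (φ j)) (hs (φ j)), hs (φ j)⟫ : ℝ)
        ≤ 1 / ((φ j : ℝ) + 1) := by
      calc (⟪(fderiv ℝ (gradient f) (ys (φ j)) - Qs (φ j)) (hs (φ j)), hs (φ j)⟫ : ℝ)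
          ≤ ‖(fderiv ℝ (gradient f) (ys (φ j)) - Qs (φ j)) (hs (φ j))‖ * ‖hs (φ j)‖ :=
            real_inner_le_norm _ _
      _ ≤ ‖fderiv ℝ (gradient f) (ys (φ j)) - Qs (φ j)‖ * ‖hs (φ j)‖ * ‖hs (φ j)‖ := by
            have := (fderiv ℝ (gradient f) (ys (φ j)) - Qs (φ j)).le_opNorm (hs (φ j))
            nlinarith [norm_nonneg (hs (φ j))]
      _ ≤ 1 / ((φ j : ℝ) + 1) := by
            rw [hhs (φ j)]
            nlinarith [h2.le]
    have hmono : 1 / ((φ j : ℝ) + 1) ≤ 1 / ((j : ℝ) + 1) := by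
      apply one_div_le_one_div_of_le (by positivity)
      have hj : j ≤ φ j := hφ.le_apply
      exact_mod_cast add_le_add_left (Nat.cast_le.2 hj) 1
    have hexp : (⟪fderiv ℝ (gradient f) (ys (φ j)) (hs (φ j)), hs (φ j)⟫ : ℝ)
        = (⟪(fderiv ℝ (gradient f) (ys (φ j)) - Qs (φ j)) (hs (φ j)), hs (φ j)⟫ : ℝ)
          + (⟪Qs (φ j) (hs (φ j)), hs (φ j)⟫ : ℝ) := by
      rw [ContinuousLinearMap.sub_apply, inner_sub_left]; ring
    rw [hexp]
    have := (hlt (φ j)).le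
    have h3 : 1 / ((φ j : ℝ) + 1) ≤ 1 / ((j : ℝ) + 1) := hmono
    calc _ ≤ 1 / ((φ j : ℝ) + 1) + 1 / ((φ j : ℝ) + 1) := add_le_add hdiffb this
    _ ≤ 2 / ((j : ℝ) + 1) := by rw [show (2:ℝ) / ((j:ℝ)+1) = 1/((j:ℝ)+1) + 1/((j:ℝ)+1) by ring]
                                exact add_le_add h3 h3
  have hQh0 : (⟪Q h, h⟫ : ℝ) ≤ 0 := by
    have h2t : Tendsto (fun j : ℕ => 2 / ((j : ℝ) + 1)) atTop (𝓝 0) := by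
      have := one_div_succ_tendsto.const_mul (2:ℝ)
      simpa [div_eq_mul_inv] using this
    exact le_of_tendsto_of_tendsto htend h2t (Filter.Eventually.of_forall hub)
  exact absurd (hpos Q hQmem h hhn) (not_lt.2 hQh0)

/-- Uniform lower bound on Hessians at differentiability points near `x`. -/
lemma hessian_lb_near (hδ : 0 < δ)
    (hdiff : ∀ y ∈ ball x δ, DifferentiableAt ℝ f y)
    (hlip : LipschitzOnWith L (gradient f) (ball x δ))
    (h0 : gradient f x = 0) {β : ℝ} (hβ : 0 < β)
    (hball : ∀ Q ∈ limHessians f x 0, ∀ h : E n, ‖h‖ = 1 → β ≤ (⟪Q h, h⟫ : ℝ)) :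
    ∃ ρ : ℝ, 0 < ρ ∧ ρ ≤ δ ∧ ∀ y ∈ ball x ρ, DifferentiableAt ℝ (gradient f) y →
      ∀ u : E n, β / 2 * ‖u‖ ^ 2 ≤ (⟪fderiv ℝ (gradient f) y u, u⟫ : ℝ) := by
  by_contra hcon
  push_neg at hcon
  have hsel : ∀ j : ℕ, ∃ y : E n, y ∈ ball x (min δ (1 / ((j : ℝ) + 1))) ∧
      DifferentiableAt ℝ (gradient f) y ∧ ∃ u : E n,
      (⟪fderiv ℝ (gradient f) y u, u⟫ : ℝ) < β / 2 * ‖u‖ ^ 2 := by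
    intro j
    obtain ⟨y, hy, hd, u, hu⟩ := hcon (min δ (1 / ((j : ℝ) + 1)))
      (lt_min hδ (by positivity)) (min_le_left _ _)
    exact ⟨y, hy, hd, u, hu⟩
  choose ys hyball hdy us hus using hsel
  have hyb : ∀ j, ys j ∈ ball x δ := fun j =>
    mem_ball.2 ((mem_ball.1 (hyball j)).trans_le (min_le_left _ _))
  have hyx : Tendsto ys atTop (𝓝 x) := by
    rw [tendsto_iff_dist_tendsto_zero]
    exact squeeze_zero (fun j => dist_nonneg)
      (fun j => ((mem_ball.1 (hyball j)).trans_le (min_le_right _ _)).le) one_div_succ_tendsto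
  have hune : ∀ j, us j ≠ 0 := by
    intro j hj
    have := hus j
    rw [hj] at this
    simp at this
  set vs : ℕ → E n := fun j => ‖us j‖⁻¹ • us j with hvs
  have hvn : ∀ j, ‖vs j‖ = 1 := fun j => norm_smul_inv_norm (hune j)
  have hvlt : ∀ j, (⟪fderiv ℝ (gradient f) (ys j) (vs j), vs j⟫ : ℝ) < β / 2 := by
    intro j
    have hn : (0:ℝ) < ‖us j‖ := norm_pos_iff.2 (hune j)
    have : (⟪fderiv ℝ (gradient f) (ys j) (vs j), vs j⟫ : ℝ)
        = ‖us j‖⁻¹ ^ 2 * (⟪fderiv ℝ (gradient f) (ys j) (us j), us j⟫ : ℝ) := by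
      simp only [hvs, map_smul, real_inner_smul_left, real_inner_smul_right]
      ring
    rw [this]
    have h2 := hus j
    have hinv : (0:ℝ) < ‖us j‖⁻¹ ^ 2 := by positivity
    calc ‖us j‖⁻¹ ^ 2 * (⟪fderiv ℝ (gradient f) (ys j) (us j), us j⟫ : ℝ)
        < ‖us j‖⁻¹ ^ 2 * (β / 2 * ‖us j‖ ^ 2) := by
          exact (mul_lt_mul_iff_right₀ hinv).2 h2
    _ = β / 2 := by field_simp
  obtain ⟨Q, h, φ, hφ, hQmem, hhn, htend⟩ :=
    core_extract hδ hdiff hlip h0 ys hyb hdy hyx vs hvn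
  have hle : (⟪Q h, h⟫ : ℝ) ≤ β / 2 :=
    le_of_tendsto htend (Filter.Eventually.of_forall fun j => (hvlt (φ j)).le)
  have := hball Q hQmem h hhn
  linarith


/-- 1-D monotonicity from an a.e. positive derivative, for Lipschitz functions. -/
lemma mono1D {φ : ℝ → ℝ} {K : NNReal} {a b : ℝ} (hab : a ≤ b)
    (hlip : LipschitzOnWith K φ (Icc a b)) {N : Set ℝ}
    (hN : MeasureTheory.volume N = 0)
    (hd : ∀ t ∈ Icc a b, t ∉ N → ∃ d : ℝ, HasDerivAt φ d t ∧ 0 < d) :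
    φ a ≤ φ b := by
  rcases eq_or_lt_of_le hab with rfl | hab'
  · exact le_refl _
  by_contra hba
  push_neg at hba
  have hcont : ContinuousOn φ (Icc a b) := hlip.continuousOn
  have hclaim : Ioo (φ b) (φ a) ⊆ φ '' (N ∩ Icc a b) := by
    intro y hy
    set T : Set ℝ := Icc a b ∩ φ ⁻¹' (Ici y) with hT
    have haT : a ∈ T := ⟨left_mem_Icc.2 hab, hy.2.le⟩
    have hTbdd : BddAbove T := ⟨b, fun t ht => ht.1.2⟩
    have hTclosed : IsClosed T :=
      hcont.preimage_isClosed_of_isClosed isClosed_Icc isClosed_Ici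
    set t₀ : ℝ := sSup T with ht₀
    have ht₀T : t₀ ∈ T := hTclosed.csSup_mem ⟨a, haT⟩ hTbdd
    have ht₀I : t₀ ∈ Icc a b := ht₀T.1
    have hyt₀ : y ≤ φ t₀ := ht₀T.2
    have hright : ∀ s, t₀ < s → s ≤ b → φ s < y := by
      intro s hs hsb
      by_contra hge
      push_neg at hge
      have hsT : s ∈ T := ⟨⟨ht₀I.1.trans hs.le, hsb⟩, hge⟩
      exact absurd (le_csSup hTbdd hsT) (not_le.2 hs)
    have ht₀b : t₀ < b := by
      rcases lt_or_eq_of_le ht₀I.2 with h | h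
      · exact h
      · exfalso
        rw [h] at hyt₀
        exact absurd hyt₀ (not_le.2 hy.1)
    -- continuity from the right gives φ t₀ ≤ y
    have hneb : (𝓝[Ioc t₀ b] t₀).NeBot := by
      rw [← mem_closure_iff_nhdsWithin_neBot, closure_Ioc (ne_of_lt ht₀b)]
      exact ⟨le_refl _, ht₀b.le⟩
    have hsub : Ioc t₀ b ⊆ Icc a b := fun s hs => ⟨ht₀I.1.trans hs.1.le, hs.2⟩
    have hct : ContinuousWithinAt φ (Ioc t₀ b) t₀ :=
      (hcont.continuousWithinAt ht₀I).mono hsub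
    have hle : φ t₀ ≤ y := by
      refine le_of_tendsto hct ?_
      exact eventually_mem_nhdsWithin.mono fun s hs => (hright s hs.1 hs.2).le
    have hφt₀ : φ t₀ = y := le_antisymm hle hyt₀
    -- t₀ must be in the bad set N
    have ht₀N : t₀ ∈ N := by
      by_contra ht₀N
      obtain ⟨d, hder, hdpos⟩ := hd t₀ ht₀I ht₀N
      have hslope := hasDerivAt_iff_tendsto_slope.1 hder
      have hslope' : Tendsto (slope φ t₀) (𝓝[Ioc t₀ b] t₀) (𝓝 d) :=
        hslope.mono_left (nhdsWithin_mono _ (fun s hs => ne_of_gt hs.1))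
      have hd0 : d ≤ 0 := by
        refine le_of_tendsto hslope' ?_
        refine eventually_mem_nhdsWithin.mono fun s hs => ?_
        rw [slope_def_field]
        apply div_nonpos_of_nonpos_of_nonneg
        · rw [hφt₀]
          exact sub_nonpos.2 (hright s hs.1 hs.2).le
        · exact sub_nonneg.2 hs.1.le
      exact absurd hdpos (not_lt.2 hd0)
    exact ⟨t₀, ⟨ht₀N, ht₀I⟩, hφt₀⟩
  -- measure contradiction
  have himg : MeasureTheory.volume (φ '' (N ∩ Icc a b)) = 0 := by
    have h1 := (hlip.mono inter_subset_right).hausdorffMeasure_image_le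
      (zero_le_one (α := ℝ)) (s := N ∩ Icc a b)
    rw [MeasureTheory.hausdorffMeasure_real] at h1
    have h2 : MeasureTheory.volume (N ∩ Icc a b) = 0 :=
      MeasureTheory.measure_mono_null inter_subset_left hN
    rw [h2, mul_zero] at h1
    exact le_antisymm h1 zero_le
  have h3 : MeasureTheory.volume (Ioo (φ b) (φ a)) = 0 :=
    MeasureTheory.measure_mono_null hclaim himg
  rw [Real.volume_Ioo] at h3
  have h4 : (0:ℝ) < φ a - φ b := by linarith
  exact absurd h3 (ne_of_gt (ENNReal.ofReal_pos.2 h4))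

/-- Fubini: almost every translated segment avoids a null set. -/
lemma segment_ae {N : Set (E n)} (hNm : MeasurableSet N)
    (hN : MeasureTheory.volume N = 0) (a d : E n) :
    ∀ᵐ w : E n ∂MeasureTheory.volume,
      MeasureTheory.volume {t : ℝ | a + w + t • d ∈ N} = 0 := by
  classical
  set μ : MeasureTheory.Measure (E n) := MeasureTheory.volume with hμ
  set ν : MeasureTheory.Measure ℝ := MeasureTheory.volume with hν
  have hmapm : Measurable fun z : E n × ℝ => a + z.1 + z.2 • d := by
    fun_prop
  have hmapm' : Measurable fun z : ℝ × E n => a + z.2 + z.1 • d := by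
    fun_prop
  set Bad : Set (E n × ℝ) := (fun z : E n × ℝ => a + z.1 + z.2 • d) ⁻¹' N with hBad
  set Bad' : Set (ℝ × E n) := (fun z : ℝ × E n => a + z.2 + z.1 • d) ⁻¹' N with hBad'
  have hBadm : MeasurableSet Bad := hmapm hNm
  have hBad'm : MeasurableSet Bad' := hmapm' hNm
  have hsec : ∀ t : ℝ, μ (Prod.mk t ⁻¹' Bad') = 0 := by
    intro t
    have hset : (Prod.mk t ⁻¹' Bad') = (fun w : E n => w + (a + t • d)) ⁻¹' N := by
      ext w
      have heq : a + w + t • d = w + (a + t • d) := by abel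
      simp only [hBad', Set.mem_preimage, heq]
    rw [hset]
    rw [MeasureTheory.measure_preimage_add_right μ _ N]
    exact hN
  have hprod' : (ν.prod μ) Bad' = 0 := by
    rw [MeasureTheory.Measure.measure_prod_null hBad'm]
    exact Filter.Eventually.of_forall hsec
  have hswap : Prod.swap ⁻¹' Bad' = Bad := by
    ext z
    simp [hBad, hBad', Prod.swap]
  have hprod : (μ.prod ν) Bad = 0 := by
    have := MeasureTheory.Measure.prod_swap (μ := μ) (ν := ν)
    have h2 : (ν.prod μ) Bad' = (μ.prod ν) (Prod.swap ⁻¹' Bad') := by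
      rw [← this, MeasureTheory.Measure.map_apply measurable_swap hBad'm]
    rw [h2, hswap] at hprod'
    exact hprod'
  have hfin := MeasureTheory.Measure.measure_ae_null_of_prod_null hprod
  refine hfin.mono fun w hw => ?_
  exact hw

lemma nondiff_null (hlip : LipschitzOnWith L (gradient f) (ball x δ)) :
    MeasureTheory.volume {y : E n | y ∈ ball x δ ∧ ¬DifferentiableAt ℝ (gradient f) y} = 0 := by
  have h := hlip.ae_differentiableWithinAt_of_mem (μ := MeasureTheory.volume)
  rw [MeasureTheory.ae_iff] at h
  refine MeasureTheory.measure_mono_null ?_ h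
  intro y hy
  simp only [Set.mem_setOf_eq] at hy ⊢
  intro himp
  exact hy.2 ((himp hy.1).differentiableAt (isOpen_ball.mem_nhds hy.1))

lemma nondiff_measurable (f : E n → ℝ) (x : E n) (δ : ℝ) :
    MeasurableSet {y : E n | y ∈ ball x δ ∧ ¬DifferentiableAt ℝ (gradient f) y} := by
  have h1 : MeasurableSet {y : E n | DifferentiableAt ℝ (gradient f) y} :=
    measurableSet_of_differentiableAt ℝ (gradient f)
  exact measurableSet_ball.inter h1.compl


set_option maxHeartbeats 1000000 in
/-- Strong monotonicity of the gradient from a uniform Hessian lower bound. -/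
lemma strong_mono (hdiff : ∀ y ∈ ball x δ, DifferentiableAt ℝ f y)
    (hlip : LipschitzOnWith L (gradient f) (ball x δ))
    {ρ c : ℝ} (hρ : 0 < ρ) (hρδ : ρ ≤ δ) (hc : 0 < c)
    (hlb : ∀ y ∈ ball x ρ, DifferentiableAt ℝ (gradient f) y →
      ∀ u : E n, c * ‖u‖ ^ 2 ≤ (⟪fderiv ℝ (gradient f) y u, u⟫ : ℝ))
    {a b : E n} (ha : a ∈ ball x (ρ/4)) (hb : b ∈ ball x (ρ/4)) :
    c * ‖b - a‖ ^ 2 ≤ (⟪gradient f b - gradient f a, b - a⟫ : ℝ) := by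
  set d : E n := b - a with hd
  set N : Set (E n) := {y | y ∈ ball x δ ∧ ¬DifferentiableAt ℝ (gradient f) y} with hN
  have hN0 : MeasureTheory.volume N = 0 := nondiff_null hlip
  have hNm : MeasurableSet N := nondiff_measurable f x δ
  -- choose good translations
  have hsel : ∀ j : ℕ, ∃ w : E n, ‖w‖ < min (ρ/4) (1/((j:ℝ)+1)) ∧
      MeasureTheory.volume {t : ℝ | a + w + t • d ∈ N} = 0 := by
    intro j
    have hε : (0:ℝ) < min (ρ/4) (1/((j:ℝ)+1)) := lt_min (by positivity) (by positivity)
    by_contra hcon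
    push_neg at hcon
    have hae := segment_ae hNm hN0 a d
    rw [MeasureTheory.ae_iff] at hae
    have hsub : ball (0:E n) (min (ρ/4) (1/((j:ℝ)+1))) ⊆
        {w | ¬ MeasureTheory.volume {t : ℝ | a + w + t • d ∈ N} = 0} := by
      intro w hw
      exact hcon w (by rwa [mem_ball_zero_iff] at hw)
    have h1 := MeasureTheory.measure_mono_null hsub hae
    exact absurd h1 (ne_of_gt (Metric.measure_ball_pos MeasureTheory.volume 0 hε))
  choose ws hws hsec using hsel
  have hwsρ : ∀ j, ‖ws j‖ < ρ/4 := fun j => (hws j).trans_le (min_le_left _ _)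
  -- segments stay in the ball
  have hseg : ∀ j, ∀ t ∈ Icc (0:ℝ) 1, a + ws j + t • d ∈ ball x ρ := by
    intro j t ht
    have haw : a + ws j ∈ ball x (ρ/2) := by
      rw [mem_ball_iff_norm] at ha ⊢
      calc ‖a + ws j - x‖ = ‖(a - x) + ws j‖ := by rw [add_sub_right_comm]
      _ ≤ ‖a - x‖ + ‖ws j‖ := norm_add_le _ _
      _ < ρ/4 + ρ/4 := add_lt_add ha (hwsρ j)
      _ ≤ ρ/2 := by linarith
    have hbw : b + ws j ∈ ball x (ρ/2) := by
      rw [mem_ball_iff_norm] at hb ⊢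
      calc ‖b + ws j - x‖ = ‖(b - x) + ws j‖ := by rw [add_sub_right_comm]
      _ ≤ ‖b - x‖ + ‖ws j‖ := norm_add_le _ _
      _ < ρ/4 + ρ/4 := add_lt_add hb (hwsρ j)
      _ ≤ ρ/2 := by linarith
    have h1 : a + ws j + t • d = (1 - t) • (a + ws j) + t • (b + ws j) := by
      rw [hd]
      simp only [smul_sub, sub_smul, smul_add, one_smul]
      abel
    rw [h1]
    have hsub2 : ball x (ρ/2) ⊆ ball x ρ := ball_subset_ball (by linarith)
    exact hsub2 ((convex_ball x (ρ/2)) haw hbw (by linarith [ht.2]) ht.1 (by ring))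
  -- the per-translation monotonicity
  have hkey : ∀ j, c * ‖d‖^2 ≤
      (⟪gradient f (b + ws j), d⟫ : ℝ) - (⟪gradient f (a + ws j), d⟫ : ℝ) := by
    intro j
    set φt : ℝ → ℝ := fun t => (⟪gradient f (a + ws j + t • d), d⟫ : ℝ) with hφt
    have hmain : ∀ c' : ℝ, c' < c * ‖d‖^2 → c' ≤ φt 1 - φt 0 := by
      intro c' hc'
      set ψ : ℝ → ℝ := fun t => φt t - c' * t with hψ
      have hK : LipschitzOnWith (⟨(L : ℝ) * ‖d‖^2 + |c'|, by positivity⟩ : NNReal)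
          ψ (Icc 0 1) := by
        refine lipschitzOnWith_iff_dist_le_mul.2 ?_
        intro t ht s hs
        have hpt : a + ws j + t • d ∈ ball x δ := ball_subset_ball hρδ (hseg j t ht)
        have hps : a + ws j + s • d ∈ ball x δ := ball_subset_ball hρδ (hseg j s hs)
        have hsub : (a + ws j + t • d) - (a + ws j + s • d) = (t - s) • d := by
          rw [sub_smul]; abel
        have hgl := hlip.dist_le_mul _ hpt _ hps
        rw [dist_eq_norm, dist_eq_norm, hsub, norm_smul, Real.norm_eq_abs] at hgl
        have hφdiff : |φt t - φt s| ≤ (L : ℝ) * ‖d‖^2 * |t - s| := by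
          rw [hφt]
          have h2 : (⟪gradient f (a + ws j + t • d), d⟫ : ℝ)
              - (⟪gradient f (a + ws j + s • d), d⟫ : ℝ)
              = (⟪gradient f (a + ws j + t • d) - gradient f (a + ws j + s • d), d⟫ : ℝ) := by
            rw [inner_sub_left]
          rw [h2]
          calc |(⟪gradient f (a + ws j + t • d) - gradient f (a + ws j + s • d), d⟫ : ℝ)|
              ≤ ‖gradient f (a + ws j + t • d) - gradient f (a + ws j + s • d)‖ * ‖d‖ :=
                abs_real_inner_le_norm _ _
          _ ≤ ((L : ℝ) * (|t - s| * ‖d‖)) * ‖d‖ := by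
                apply mul_le_mul_of_nonneg_right hgl (norm_nonneg d)
          _ = (L : ℝ) * ‖d‖^2 * |t - s| := by ring
        rw [Real.dist_eq, Real.dist_eq]
        have : ψ t - ψ s = (φt t - φt s) - c' * (t - s) := by rw [hψ]; ring
        rw [this]
        calc |(φt t - φt s) - c' * (t - s)| ≤ |φt t - φt s| + |c' * (t - s)| :=
              abs_sub _ _
        _ ≤ (L : ℝ) * ‖d‖^2 * |t - s| + |c'| * |t - s| := by
              rw [abs_mul]
              exact add_le_add hφdiff (le_refl _)
        _ = ((L : ℝ) * ‖d‖^2 + |c'|) * |t - s| := by ring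
      have hdc : ∀ t ∈ Icc (0:ℝ) 1, t ∉ {t : ℝ | a + ws j + t • d ∈ N} →
          ∃ D : ℝ, HasDerivAt ψ D t ∧ 0 < D := by
        intro t ht htN
        have hpρ : a + ws j + t • d ∈ ball x ρ := hseg j t ht
        have hpδ : a + ws j + t • d ∈ ball x δ := ball_subset_ball hρδ hpρ
        have hpd : DifferentiableAt ℝ (gradient f) (a + ws j + t • d) := by
          by_contra hnd
          exact htN ⟨hpδ, hnd⟩
        have hcurve : HasDerivAt (fun t : ℝ => a + ws j + t • d) d t := by
          have h1 : HasDerivAt (fun t : ℝ => t • d) ((1:ℝ) • d) t :=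
            (hasDerivAt_id t).smul_const d
          rw [one_smul] at h1
          exact h1.const_add (a + ws j)
        have hcomp : HasDerivAt (fun t : ℝ => gradient f (a + ws j + t • d))
            (fderiv ℝ (gradient f) (a + ws j + t • d) d) t :=
          HasFDerivAt.comp_hasDerivAt (f := fun t : ℝ => a + ws j + t • d) t hpd.hasFDerivAt hcurve
        have hφder := HasDerivAt.inner ℝ hcomp (hasDerivAt_const t d)
        rw [inner_zero_right, zero_add] at hφder
        have hlin : HasDerivAt (fun t : ℝ => c' * t) c' t := by
          simpa using (hasDerivAt_id t).const_mul c'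
        have hψder : HasDerivAt ψ
            ((⟪fderiv ℝ (gradient f) (a + ws j + t • d) d, d⟫ : ℝ) - c') t :=
          hφder.sub hlin
        refine ⟨_, hψder, ?_⟩
        have := hlb _ hpρ hpd d
        linarith
      have hmono := mono1D zero_le_one hK (hsec j) hdc
      have h0 : ψ 0 = φt 0 := by simp [hψ]
      have h1 : ψ 1 = φt 1 - c' := by simp [hψ]
      rw [h0, h1] at hmono
      linarith
    have he1 : a + ws j + (1:ℝ) • d = b + ws j := by rw [hd, one_smul]; abel
    have he0 : a + ws j + (0:ℝ) • d = a + ws j := by rw [zero_smul, add_zero]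
    have hφ1 : φt 1 = (⟪gradient f (b + ws j), d⟫ : ℝ) := by
      simp only [hφt]; rw [he1]
    have hφ0 : φt 0 = (⟪gradient f (a + ws j), d⟫ : ℝ) := by
      simp only [hφt]; rw [he0]
    rw [← hφ1, ← hφ0]
    by_contra hlt
    push_neg at hlt
    have := hmain ((φt 1 - φt 0 + c * ‖d‖^2)/2) (by linarith)
    linarith
  -- pass to the limit
  have hwtend : Tendsto ws atTop (𝓝 0) := by
    apply squeeze_zero_norm (fun j => ((hws j).trans_le (min_le_right _ _)).le)
    exact one_div_succ_tendsto
  have haball : a ∈ ball x δ := ball_subset_ball (by linarith) ha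
  have hbball : b ∈ ball x δ := ball_subset_ball (by linarith) hb
  have hat : Tendsto (fun j => a + ws j) atTop (𝓝 a) := by
    simpa using tendsto_const_nhds.add hwtend
  have hbt : Tendsto (fun j => b + ws j) atTop (𝓝 b) := by
    simpa using tendsto_const_nhds.add hwtend
  have hga : Tendsto (fun j => (⟪gradient f (a + ws j), d⟫ : ℝ)) atTop
      (𝓝 (⟪gradient f a, d⟫ : ℝ)) :=
    (((gradient_continuousAt hlip haball).tendsto.comp hat).inner tendsto_const_nhds)
  have hgb : Tendsto (fun j => (⟪gradient f (b + ws j), d⟫ : ℝ)) atTop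
      (𝓝 (⟪gradient f b, d⟫ : ℝ)) :=
    (((gradient_continuousAt hlip hbball).tendsto.comp hbt).inner tendsto_const_nhds)
  have hlim : c * ‖d‖^2 ≤ (⟪gradient f b, d⟫ : ℝ) - (⟪gradient f a, d⟫ : ℝ) :=
    ge_of_tendsto' (hgb.sub hga) hkey
  rw [← inner_sub_left] at hlim
  exact hlim

-- for rewriting φt values at the endpoints
lemma endpoint_one (a b w : E n) : a + w + (1:ℝ) • (b - a) = b + w := by
  rw [one_smul]; abel

lemma endpoint_zero (a w d : E n) : a + w + (0:ℝ) • d = a + w := by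
  rw [zero_smul, add_zero]


set_option maxHeartbeats 1000000 in
/-- Key estimate: a Fréchet normal `(a, -s)` to the subdifferential graph near `x`
satisfies `⟪a, s⟫ ≥ c ‖s‖²` under strong monotonicity of the gradient. -/
lemma coderiv_key (hdiff : ∀ y ∈ ball x δ, DifferentiableAt ℝ f y)
    (hlip : LipschitzOnWith L (gradient f) (ball x δ))
    {ρ c : ℝ} (hρ : 0 < ρ) (hρδ : ρ ≤ δ) (hc : 0 < c)
    (hlb : ∀ y ∈ ball x ρ, DifferentiableAt ℝ (gradient f) y →
      ∀ u : E n, c * ‖u‖ ^ 2 ≤ (⟪fderiv ℝ (gradient f) y u, u⟫ : ℝ))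
    {yk : E n} (hyk : yk ∈ ball x (ρ/8)) {a s : E n}
    (hfre : (a, -s) ∈ frechetNormal2 (Sgr f) (yk, gradient f yk)) :
    c * ‖s‖ ^ 2 ≤ (⟪a, s⟫ : ℝ) := by
  rcases eq_or_ne s 0 with rfl | hsne
  · simp
  have hsn : (0:ℝ) < ‖s‖ := norm_pos_iff.2 hsne
  have hykρ4 : yk ∈ ball x (ρ/4) := ball_subset_ball (by linarith) hyk
  have hykδ : yk ∈ ball x δ := ball_subset_ball (by linarith) hyk
  refine le_of_forall_pos_le_add ?_
  intro η hη
  have hD : (0:ℝ) < (1 + (L:ℝ)) * ‖s‖ + 1 := by positivity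
  set ε : ℝ := η / ((1 + (L:ℝ)) * ‖s‖ + 1) with hεdef
  have hε0 : 0 < ε := div_pos hη hD
  obtain ⟨δ', hδ'0, hfq⟩ := hfre ε hε0
  set t : ℝ := min (δ' / (((L:ℝ)+1) * (‖s‖ + 1))) ((ρ/8) / (‖s‖ + 1)) with htdef
  have ht0 : 0 < t := lt_min (by positivity) (by positivity)
  have hb1 : t * (((L:ℝ)+1) * (‖s‖ + 1)) ≤ δ' := by
    rw [← le_div_iff₀ (by positivity)]
    exact min_le_left _ _
  have hb2 : t * (‖s‖ + 1) ≤ ρ/8 := by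
    rw [← le_div_iff₀ (by positivity)]
    exact min_le_right _ _
  have hA : t * ‖s‖ < δ' := by nlinarith [L.coe_nonneg, ht0, hsn]
  have hB : (L:ℝ) * (t * ‖s‖) < δ' := by nlinarith [L.coe_nonneg, ht0, hsn]
  have hC : t * ‖s‖ < ρ/8 := by nlinarith [ht0, hsn]
  set q1 : E n := yk - t • s with hq1def
  have hq1yk : q1 - yk = -(t • s) := by rw [hq1def]; abel
  have hntq : ‖q1 - yk‖ = t * ‖s‖ := by
    rw [hq1yk, norm_neg, norm_smul, Real.norm_eq_abs, abs_of_pos ht0]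
  have hq1ρ4 : q1 ∈ ball x (ρ/4) := by
    rw [mem_ball_iff_norm]
    have he : q1 - x = (yk - x) - t • s := by rw [hq1def]; abel
    rw [he]
    have h1 : ‖(yk - x) - t • s‖ ≤ ‖yk - x‖ + ‖t • s‖ := norm_sub_le _ _
    have h2 : ‖yk - x‖ < ρ/8 := by rwa [mem_ball_iff_norm] at hyk
    have h3 : ‖t • s‖ = t * ‖s‖ := by
      rw [norm_smul, Real.norm_eq_abs, abs_of_pos ht0]
    rw [h3] at h1
    linarith
  have hq1δ : q1 ∈ ball x δ := ball_subset_ball (by linarith) hq1ρ4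
  have hglip : ‖gradient f q1 - gradient f yk‖ ≤ (L:ℝ) * (t * ‖s‖) := by
    have := hlip.dist_le_mul q1 hq1δ yk hykδ
    rw [dist_eq_norm, dist_eq_norm, hntq] at this
    exact this
  have hfres := hfq (q1, gradient f q1) (mem_Sgr hdiff hlip hq1δ)
    (by rw [show ((q1, gradient f q1).1 - (yk, gradient f yk).1) = q1 - yk from rfl, hntq]
        exact hA)
    (by show ‖gradient f q1 - gradient f yk‖ < δ'
        exact lt_of_le_of_lt hglip hB)
  -- simplify the Fréchet inequality
  have hlhs : (⟪a, q1 - yk⟫ : ℝ) + (⟪-s, gradient f q1 - gradient f yk⟫ : ℝ)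
      = -(t * (⟪a, s⟫ : ℝ)) - (⟪gradient f q1 - gradient f yk, s⟫ : ℝ) := by
    have hsd : (⟪-s, gradient f q1 - gradient f yk⟫ : ℝ)
        = -(⟪gradient f q1 - gradient f yk, s⟫ : ℝ) := by
      rw [inner_neg_left, real_inner_comm]
    have had : (⟪a, q1 - yk⟫ : ℝ) = -(t * (⟪a, s⟫ : ℝ)) := by
      rw [hq1yk, inner_neg_right, real_inner_smul_right]
    rw [hsd, had]
    ring
  have hrhs : ε * (‖(q1, gradient f q1).1 - (yk, gradient f yk).1‖
      + ‖(q1, gradient f q1).2 - (yk, gradient f yk).2‖) ≤ ε * ((1 + (L:ℝ)) * (t * ‖s‖)) := by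
    have h1 : ‖(q1, gradient f q1).1 - (yk, gradient f yk).1‖ = t * ‖s‖ := hntq
    apply mul_le_mul_of_nonneg_left _ hε0.le
    rw [h1]
    have := hglip
    nlinarith
  have hfres' : -(t * (⟪a, s⟫ : ℝ)) - (⟪gradient f q1 - gradient f yk, s⟫ : ℝ)
      ≤ ε * ((1 + (L:ℝ)) * (t * ‖s‖)) := by
    calc -(t * (⟪a, s⟫ : ℝ)) - (⟪gradient f q1 - gradient f yk, s⟫ : ℝ)
        = (⟪a, q1 - yk⟫ : ℝ) + (⟪-s, gradient f q1 - gradient f yk⟫ : ℝ) := hlhs.symm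
    _ ≤ _ := hfres
    _ ≤ _ := hrhs
  -- strong monotonicity along the segment
  have hmono := strong_mono hdiff hlip hρ hρδ hc hlb hykρ4 hq1ρ4
  have hmono' : (⟪gradient f q1 - gradient f yk, s⟫ : ℝ) ≤ -(c * t * ‖s‖^2) := by
    have h1 : (⟪gradient f q1 - gradient f yk, q1 - yk⟫ : ℝ)
        = -(t * (⟪gradient f q1 - gradient f yk, s⟫ : ℝ)) := by
      rw [hq1yk, inner_neg_right, real_inner_smul_right]
    rw [h1, hntq] at hmono
    have h2 : c * (t * ‖s‖)^2 = t * (c * t * ‖s‖^2) := by ring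
    rw [h2] at hmono
    have h3 : t * (c * t * ‖s‖^2) ≤ t * (-(⟪gradient f q1 - gradient f yk, s⟫ : ℝ)) := by
      rw [mul_neg]
      linarith
    have h4 := le_of_mul_le_mul_left h3 ht0
    linarith
  -- combine
  have hcomb : t * (c * ‖s‖^2 - (⟪a, s⟫ : ℝ)) ≤ t * (ε * ((1 + (L:ℝ)) * ‖s‖)) := by
    nlinarith [hfres', hmono']
  have h5 := le_of_mul_le_mul_left hcomb ht0
  have hεb : ε * ((1 + (L:ℝ)) * ‖s‖) ≤ η := by
    rw [hεdef, div_mul_eq_mul_div, div_le_iff₀ hD]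
    nlinarith [hη.le, L.coe_nonneg, hsn]
  linarith

set_option maxHeartbeats 1000000 in
/-- Positivity of the coderivative pairing from uniform Hessian bounds. -/
lemma coderiv_pos (hδ : 0 < δ)
    (hdiff : ∀ y ∈ ball x δ, DifferentiableAt ℝ f y)
    (hlip : LipschitzOnWith L (gradient f) (ball x δ))
    (h0 : gradient f x = 0) {β : ℝ} (hβ : 0 < β)
    (hB : ∀ Q ∈ limHessians f x 0, ∀ h : E n, ‖h‖ = 1 → β ≤ (⟪Q h, h⟫ : ℝ))
    {h p : E n} (hh : ‖h‖ = 1) (hp : (p, -h) ∈ limNormal2 (Sgr f) (x, 0)) :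
    0 < (⟪p, h⟫ : ℝ) := by
  obtain ⟨ρ, hρ0, hρδ, hlb⟩ := hessian_lb_near hδ hdiff hlip h0 hβ hB
  have hc : (0:ℝ) < β/2 := by linarith
  obtain ⟨pk, vk, hmem, hpk, hvk⟩ := hp
  have hpk1 : Tendsto (fun k => (pk k).1) atTop (𝓝 x) :=
    ((continuous_fst.tendsto (x, (0 : E n))).comp hpk).congr fun k => rfl
  have hevent : ∀ᶠ k in atTop, (pk k).1 ∈ ball x (ρ/8) :=
    hpk1.eventually_mem (isOpen_ball.mem_nhds (mem_ball_self (by positivity)))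
  have hkk : ∀ᶠ k in atTop,
      β/2 * ‖-(vk k).2‖ ^ 2 ≤ (⟪(vk k).1, -(vk k).2⟫ : ℝ) := by
    filter_upwards [hevent] with k hk
    have hy2 : (pk k).2 = gradient f (pk k).1 :=
      Sgr_eq_grad hdiff hlip (hmem k).1 (ball_subset_ball (by linarith) hk)
    have hfre' : ((vk k).1, -(-(vk k).2)) ∈
        frechetNormal2 (Sgr f) ((pk k).1, gradient f (pk k).1) := by
      rw [neg_neg, ← hy2]
      exact (hmem k).2
    exact coderiv_key hdiff hlip hρ0 hρδ hc hlb hk hfre'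
  have hva : Tendsto (fun k => (vk k).1) atTop (𝓝 p) :=
    ((continuous_fst.tendsto (p, -h)).comp hvk).congr fun k => rfl
  have hvs : Tendsto (fun k => -(vk k).2) atTop (𝓝 h) := by
    have := (((continuous_snd.tendsto (p, -h)).comp hvk).congr fun k => rfl).neg
    rwa [neg_neg] at this
  have hlhs : Tendsto (fun k => β/2 * ‖-(vk k).2‖ ^ 2) atTop (𝓝 (β/2 * ‖h‖ ^ 2)) :=
    ((hvs.norm).pow 2).const_mul (β/2)
  have hrhs : Tendsto (fun k => (⟪(vk k).1, -(vk k).2⟫ : ℝ)) atTop (𝓝 (⟪p, h⟫ : ℝ)) :=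
    hva.inner hvs
  have hfinal : β/2 * ‖h‖ ^ 2 ≤ (⟪p, h⟫ : ℝ) :=
    le_of_tendsto_of_tendsto hlhs hrhs hkk
  rw [hh] at hfinal
  nlinarith

end Aux

/-- Corollary `cor:equiv` for `C^{1,1}` functions: the
coderivative positivity condition is equivalent to uniform positive
definiteness of the limiting Hessians. -/
theorem statement9
    (f : E n → ℝ) (x : E n)
    (hC11 : C11Near f x) (h0 : gradient f x = 0) :
    (∀ h : E n, ‖h‖ = 1 →
      ∀ p ∈ coderiv (fun y => limSubdiff (fun w => ((f w : ℝ) : EReal)) y) x 0 h,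
        0 < (⟪p, h⟫ : ℝ)) ↔
    (∃ β : ℝ, 0 < β ∧ ∀ Q ∈ limHessians f x 0, ∀ h : E n, ‖h‖ = 1 →
      β ≤ (⟪Q h, h⟫ : ℝ)) := by
  obtain ⟨δ, hδ, hdiff, L, hlip⟩ := hC11
  constructor
  · intro hi
    exact exists_beta hδ hdiff hlip h0
      (hessian_posdef_of_coderiv_pos hδ hdiff hlip h0 hi)
  · rintro ⟨β, hβ, hB⟩ h hh p hp
    exact coderiv_pos hδ hdiff hlip h0 hβ hB hh hp

end Paper
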